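/- Let G = (V, E) be a finite undirected simple graph and let s ≥ 1 be an integer. Let W_1, …, W_k be pairwise disjoint subsets of V, each of which induces an s-component of G (every connected component of G[W_i] has at most s vertices). Then every F ⊆ W_1 ∪ ⋯ ∪ W_k that induces an s-bundle in G satisfies |F| ≤ Σ_{i=1}^{k} min(|W_i|, s) (the partition-based upper bound PUB). -/
import Mathlib


open Finset

variable {V : Type*} [Fintype V] [DecidableEq V]

/-- `S` induces an `s`-bundle in `G`: for every `T ⊆ S` with `|T| < |S| - s`,
the subgraph of `G` induced on `S \ T` is connected. -/
def IsSBundle (G : SimpleGraph V) (s : ℕ) (S : Finset V) : Prop :=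
  ∀ T ⊆ S, (T.card : ℤ) < (S.card : ℤ) - (s : ℤ) →
    (G.induce (↑(S \ T) : Set V)).Connected

/-- `W` induces an `s`-component of `G`: every connected component of the
induced subgraph `G[W]` has at most `s` vertices. -/
def IsSComponent (G : SimpleGraph V) (s : ℕ) (W : Finset V) : Prop :=
  ∀ c : (G.induce (↑W : Set V)).ConnectedComponent, c.supp.ncard ≤ s

/-- Partition-based upper bound (PUB): if `W 1, …, W k` are pairwise disjoint
`s`-components, then any `s`-bundle inside their union has at most
`∑ i, min |W i| s` vertices. -/
theorem partition_upper_bound (G : SimpleGraph V) (s k : ℕ) (hs : 1 ≤ s)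
    (W : Fin k → Finset V)
    (hdisj : ∀ i j, i ≠ j → Disjoint (W i) (W j))
    (hcomp : ∀ i, IsSComponent G s (W i))
    (F : Finset V) (hFW : F ⊆ Finset.univ.biUnion W)
    (hF : IsSBundle G s F) :
    F.card ≤ ∑ i, min (W i).card s := by
  have key : ∀ i, (F ∩ W i).card ≤ min (W i).card s := by
    intro i
    rw [le_min_iff]
    refine ⟨card_le_card inter_subset_right, ?_⟩
    by_contra hlt
    push_neg at hlt
    have hsum : (F ∩ W i).card + (F \ W i).card = F.card :=
      Finset.card_inter_add_card_sdiff F (W i)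
    have hcard : ((F \ W i).card : ℤ) < (F.card : ℤ) - (s : ℤ) := by omega
    have hconn := hF (F \ W i) sdiff_subset hcard
    rw [Finset.sdiff_sdiff_self_left] at hconn
    have hne : (F ∩ W i).Nonempty := by rw [← card_pos]; omega
    obtain ⟨v, hv⟩ := hne
    have hvW : v ∈ W i := (mem_inter.mp hv).2
    set c := (G.induce (↑(W i) : Set V)).connectedComponentMk ⟨v, hvW⟩ with hc
    have hwex : ∃ w ∈ F ∩ W i, ∀ (hw : w ∈ W i),
        (G.induce (↑(W i) : Set V)).connectedComponentMk ⟨w, hw⟩ ≠ c := by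
      by_contra hall
      push_neg at hall
      set A : Set (↑(W i) : Set V) := {x | x.1 ∈ F} with hA
      have hAsub : A ⊆ c.supp := by
        rintro ⟨x, hx⟩ hxA
        have hxW : x ∈ W i := by simpa using hx
        obtain ⟨_, heq⟩ := hall x (mem_inter.mpr ⟨hxA, hxW⟩)
        simpa [SimpleGraph.ConnectedComponent.mem_supp_iff] using heq
      have h1 : A.ncard ≤ c.supp.ncard := Set.ncard_le_ncard hAsub (Set.toFinite _)
      have h2 : c.supp.ncard ≤ s := hcomp i c
      have himg : Subtype.val '' A = (↑(F ∩ W i) : Set V) := by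
        ext x
        simp only [Set.mem_image, Finset.coe_inter, Set.mem_inter_iff, Finset.mem_coe, hA,
          Set.mem_setOf_eq]
        constructor
        · rintro ⟨⟨y, hy⟩, hyF, rfl⟩
          exact ⟨hyF, by simpa using hy⟩
        · rintro ⟨hxF, hxW⟩
          exact ⟨⟨x, by simpa using hxW⟩, hxF, rfl⟩
      have h3 : (F ∩ W i).card = A.ncard := by
        rw [← Set.ncard_coe_finset, ← himg, Set.ncard_image_of_injective A Subtype.val_injective]
      omega
    obtain ⟨w, hw, hwne⟩ := hwex
    have hwW : w ∈ W i := (mem_inter.mp hw).2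
    have hv' : v ∈ (↑(F ∩ W i) : Set V) := by simpa using hv
    have hw' : w ∈ (↑(F ∩ W i) : Set V) := by simpa using hw
    have r : (G.induce (↑(F ∩ W i) : Set V)).Reachable ⟨v, hv'⟩ ⟨w, hw'⟩ :=
      hconn.preconnected _ _
    let φ : G.induce (↑(F ∩ W i) : Set V) →g G.induce (↑(W i) : Set V) :=
      ⟨fun x => ⟨x.1, by
        have hx := x.2
        simp only [Finset.coe_inter, Set.mem_inter_iff] at hx
        exact hx.2⟩, fun {a b} h => h⟩
    have r' := r.map φ
    have := SimpleGraph.ConnectedComponent.sound r'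
    exact hwne hwW (by simpa [φ, hc] using this.symm)
  calc F.card ≤ (Finset.univ.biUnion (fun i => F ∩ W i)).card := by
        apply card_le_card
        intro x hx
        obtain ⟨j, _, hj⟩ := Finset.mem_biUnion.mp (hFW hx)
        exact Finset.mem_biUnion.mpr ⟨j, Finset.mem_univ j, mem_inter.mpr ⟨hx, hj⟩⟩
    _ ≤ ∑ i, (F ∩ W i).card := card_biUnion_le
    _ ≤ ∑ i, min (W i).card s := Finset.sum_le_sum fun i _ => key i
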